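/- For every ρ > 0 and every z ∈ ℝ, the function H(ρ,z) = 2·A·z + Σ_{i=1}^r a_i·(z − z_i)·d_i + (ρ²/2)·Σ_{i=1}^r a_i·log((d_i + z − z_i)/(d_i − z + z_i)) is a conjugate function of U(ρ,z) = A·log(ρ²) + Σ_{i=1}^r a_i·(2·d_i − (z − z_i)·log((d_i + z − z_i)/(d_i − z + z_i))), that is: ∂H/∂z (ρ,z) = ρ·∂U/∂ρ (ρ,z) and ∂H/∂ρ (ρ,z) = −ρ·∂U/∂z (ρ,z). -/

import Mathlib

open Finset

/-- The distance `d_i(ρ,z) = (ρ² + (z − z_i)²)^{1/2}`. -/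
noncomputable def dd {r : ℕ} (zs : Fin r → ℝ) (ρ z : ℝ) (i : Fin r) : ℝ :=
  Real.sqrt (ρ ^ 2 + (z - zs i) ^ 2)

/-- The generating function `U(ρ,z)`. -/
noncomputable def genU {r : ℕ} (A : ℝ) (a zs : Fin r → ℝ) (ρ z : ℝ) : ℝ :=
  A * Real.log (ρ ^ 2) +
    ∑ i, a i * (2 * dd zs ρ z i -
      (z - zs i) * Real.log ((dd zs ρ z i + z - zs i) / (dd zs ρ z i - z + zs i)))

/-- The conjugate function `H(ρ,z)`. -/
noncomputable def genH {r : ℕ} (A : ℝ) (a zs : Fin r → ℝ) (ρ z : ℝ) : ℝ :=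
  2 * A * z + ∑ i, a i * (z - zs i) * dd zs ρ z i +
    (ρ ^ 2 / 2) *
      ∑ i, a i * Real.log ((dd zs ρ z i + z - zs i) / (dd zs ρ z i - z + zs i))

variable {r : ℕ} (zs : Fin r → ℝ) (ρ z : ℝ) (i : Fin r)

lemma dd_pos (hρ : 0 < ρ) : 0 < dd zs ρ z i :=
  Real.sqrt_pos.mpr (by positivity)

lemma dd_sq (hρ : 0 < ρ) : dd zs ρ z i ^ 2 = ρ ^ 2 + (z - zs i) ^ 2 :=
  Real.sq_sqrt (by positivity)

lemma abs_lt_dd (hρ : 0 < ρ) : |z - zs i| < dd zs ρ z i := by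
  rw [← Real.sqrt_sq_eq_abs]
  exact Real.sqrt_lt_sqrt (sq_nonneg _) (by nlinarith)

lemma dd_add_pos (hρ : 0 < ρ) : 0 < dd zs ρ z i + z - zs i := by
  have h1 := abs_lt_dd zs ρ z i hρ
  have h2 := neg_abs_le (z - zs i)
  linarith

lemma dd_sub_pos (hρ : 0 < ρ) : 0 < dd zs ρ z i - z + zs i := by
  have h1 := abs_lt_dd zs ρ z i hρ
  have h2 := le_abs_self (z - zs i)
  linarith

lemma hasDerivAt_dd_z (hρ : 0 < ρ) :
    HasDerivAt (fun t => dd zs ρ t i) ((z - zs i) / dd zs ρ z i) z := by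
  have h1 : HasDerivAt (fun t : ℝ => ρ ^ 2 + (t - zs i) ^ 2) (2 * (z - zs i)) z := by
    simpa using (((hasDerivAt_id z).sub_const (zs i)).pow 2).const_add (ρ ^ 2)
  have h2 := h1.sqrt (by positivity)
  convert h2 using 1
  · rfl
  unfold dd
  rw [mul_comm 2]
  rw [div_eq_div_iff (by positivity) (by positivity)]
  ring

lemma hasDerivAt_dd_ρ (hρ : 0 < ρ) :
    HasDerivAt (fun s => dd zs s z i) (ρ / dd zs ρ z i) ρ := by
  have h1 : HasDerivAt (fun s : ℝ => s ^ 2 + (z - zs i) ^ 2) (2 * ρ) ρ := by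
    simpa using ((hasDerivAt_pow 2 ρ).add_const ((z - zs i) ^ 2))
  have h2 := h1.sqrt (by positivity)
  convert h2 using 1
  · rfl
  unfold dd
  rw [mul_comm 2]
  rw [div_eq_div_iff (by positivity) (by positivity)]
  ring

lemma hasDerivAt_L_z (hρ : 0 < ρ) :
    HasDerivAt (fun t => Real.log ((dd zs ρ t i + t - zs i) / (dd zs ρ t i - t + zs i)))
      (2 / dd zs ρ z i) z := by
  have hEq : ∀ t : ℝ, Real.log ((dd zs ρ t i + t - zs i) / (dd zs ρ t i - t + zs i))
      = Real.log (dd zs ρ t i + t - zs i) - Real.log (dd zs ρ t i - t + zs i) := fun t =>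
    Real.log_div (ne_of_gt (dd_add_pos zs ρ t i hρ)) (ne_of_gt (dd_sub_pos zs ρ t i hρ))
  have h1 : HasDerivAt (fun t => Real.log (dd zs ρ t i + t - zs i))
      (((z - zs i) / dd zs ρ z i + 1) / (dd zs ρ z i + z - zs i)) z := by
    have := (((hasDerivAt_dd_z zs ρ z i hρ).add (hasDerivAt_id z)).sub_const (zs i)).log
      (ne_of_gt (dd_add_pos zs ρ z i hρ))
    simpa using this
  have h2 : HasDerivAt (fun t => Real.log (dd zs ρ t i - t + zs i))
      (((z - zs i) / dd zs ρ z i - 1) / (dd zs ρ z i - z + zs i)) z := by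
    have := (((hasDerivAt_dd_z zs ρ z i hρ).sub (hasDerivAt_id z)).add_const (zs i)).log
      (ne_of_gt (dd_sub_pos zs ρ z i hρ))
    simpa using this
  have h3 := h1.sub h2
  have h4 : HasDerivAt (fun t => Real.log ((dd zs ρ t i + t - zs i) / (dd zs ρ t i - t + zs i)))
      (((z - zs i) / dd zs ρ z i + 1) / (dd zs ρ z i + z - zs i)
        - ((z - zs i) / dd zs ρ z i - 1) / (dd zs ρ z i - z + zs i)) z := by
    apply h3.congr_of_eventuallyEq
    filter_upwards with t using hEq t
  convert h4 using 1
  have hd := dd_pos zs ρ z i hρ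
  have hp := dd_add_pos zs ρ z i hρ
  have hm := dd_sub_pos zs ρ z i hρ
  have hsq := dd_sq zs ρ z i hρ
  field_simp
  ring_nf

lemma hasDerivAt_L_ρ (hρ : 0 < ρ) :
    HasDerivAt (fun s => Real.log ((dd zs s z i + z - zs i) / (dd zs s z i - z + zs i)))
      (-2 * (z - zs i) / (ρ * dd zs ρ z i)) ρ := by
  have hEq : ∀ s : ℝ, 0 < s → Real.log ((dd zs s z i + z - zs i) / (dd zs s z i - z + zs i))
      = Real.log (dd zs s z i + z - zs i) - Real.log (dd zs s z i - z + zs i) := fun s hs =>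
    Real.log_div (ne_of_gt (dd_add_pos zs s z i hs)) (ne_of_gt (dd_sub_pos zs s z i hs))
  have h1 : HasDerivAt (fun s => Real.log (dd zs s z i + z - zs i))
      ((ρ / dd zs ρ z i) / (dd zs ρ z i + z - zs i)) ρ := by
    have := (((hasDerivAt_dd_ρ zs ρ z i hρ).add_const z).sub_const (zs i)).log
      (ne_of_gt (dd_add_pos zs ρ z i hρ))
    simpa using this
  have h2 : HasDerivAt (fun s => Real.log (dd zs s z i - z + zs i))
      ((ρ / dd zs ρ z i) / (dd zs ρ z i - z + zs i)) ρ := by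
    have := (((hasDerivAt_dd_ρ zs ρ z i hρ).sub_const z).add_const (zs i)).log
      (ne_of_gt (dd_sub_pos zs ρ z i hρ))
    simpa using this
  have h3 := h1.sub h2
  have h4 : HasDerivAt (fun s => Real.log ((dd zs s z i + z - zs i) / (dd zs s z i - z + zs i)))
      ((ρ / dd zs ρ z i) / (dd zs ρ z i + z - zs i)
        - (ρ / dd zs ρ z i) / (dd zs ρ z i - z + zs i)) ρ := by
    apply h3.congr_of_eventuallyEq
    filter_upwards [eventually_gt_nhds hρ] with s hs using hEq s hs
  convert h4 using 1
  have hd := dd_pos zs ρ z i hρ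
  have hp := dd_add_pos zs ρ z i hρ
  have hm := dd_sub_pos zs ρ z i hρ
  have hsq := dd_sq zs ρ z i hρ
  field_simp
  linear_combination (-2 * (z - zs i)) * hsq

variable (A : ℝ) (a : Fin r → ℝ)

lemma hasDerivAt_U_ρ (hρ : 0 < ρ) :
    HasDerivAt (fun s => genU A a zs s z)
      (2 * A / ρ + ∑ i, a i * (2 * dd zs ρ z i) / ρ) ρ := by
  have hlog : HasDerivAt (fun s : ℝ => A * Real.log (s ^ 2)) (2 * A / ρ) ρ := by
    have h := ((hasDerivAt_pow 2 ρ).log (by positivity)).const_mul A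
    convert h using 1
    · rfl
    · rfl
    field_simp
    ring
  have hterm : ∀ i : Fin r, HasDerivAt (fun s => a i * (2 * dd zs s z i -
      (z - zs i) * Real.log ((dd zs s z i + z - zs i) / (dd zs s z i - z + zs i))))
      (a i * (2 * dd zs ρ z i) / ρ) ρ := by
    intro i
    have h := (((hasDerivAt_dd_ρ zs ρ z i hρ).const_mul 2).sub
      ((hasDerivAt_L_ρ zs ρ z i hρ).const_mul (z - zs i))).const_mul (a i)
    convert h using 1
    · rfl
    · rfl
    · rfl
    have hd := dd_pos zs ρ z i hρ
    have hsq := dd_sq zs ρ z i hρ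
    field_simp
    linear_combination (a i) * hsq
  have hsum := HasDerivAt.fun_sum (fun i (_ : i ∈ Finset.univ) => hterm i)
  exact hlog.add hsum

lemma hasDerivAt_U_z (hρ : 0 < ρ) :
    HasDerivAt (fun s => genU A a zs ρ s)
      (∑ i, -(a i * Real.log ((dd zs ρ z i + z - zs i) / (dd zs ρ z i - z + zs i)))) z := by
  have hterm : ∀ i : Fin r, HasDerivAt (fun s => a i * (2 * dd zs ρ s i -
      (s - zs i) * Real.log ((dd zs ρ s i + s - zs i) / (dd zs ρ s i - s + zs i))))
      (-(a i * Real.log ((dd zs ρ z i + z - zs i) / (dd zs ρ z i - z + zs i)))) z := by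
    intro i
    have hprod := ((hasDerivAt_id z).sub_const (zs i)).mul (hasDerivAt_L_z zs ρ z i hρ)
    have h := (((hasDerivAt_dd_z zs ρ z i hρ).const_mul 2).sub hprod).const_mul (a i)
    convert h using 1
    · rfl
    · rfl
    · rfl
    have hd := dd_pos zs ρ z i hρ
    simp only [id_eq]
    field_simp
    ring
  have hsum := HasDerivAt.fun_sum (fun i (_ : i ∈ Finset.univ) => hterm i)
  have := (hasDerivAt_const z (A * Real.log (ρ ^ 2))).fun_add hsum
  simpa [genU] using this

lemma hasDerivAt_H_z (hρ : 0 < ρ) :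
    HasDerivAt (fun t => genH A a zs ρ t)
      ((2 * A + ∑ i, (a i * dd zs ρ z i + a i * (z - zs i) * ((z - zs i) / dd zs ρ z i)))
        + ρ ^ 2 / 2 * ∑ i, a i * (2 / dd zs ρ z i)) z := by
  have h1 : HasDerivAt (fun t : ℝ => 2 * A * t) (2 * A) z := by
    simpa using (hasDerivAt_id z).const_mul (2 * A)
  have hterm : ∀ i : Fin r, HasDerivAt (fun t => a i * (t - zs i) * dd zs ρ t i)
      (a i * dd zs ρ z i + a i * (z - zs i) * ((z - zs i) / dd zs ρ z i)) z := by
    intro i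
    have h := (((hasDerivAt_id z).sub_const (zs i)).const_mul (a i)).mul
      (hasDerivAt_dd_z zs ρ z i hρ)
    convert h using 1
    · rfl
    · rfl
    · rfl
    simp only [id_eq]
    ring
  have hLsum := HasDerivAt.fun_sum (fun i (_ : i ∈ Finset.univ) =>
    ((hasDerivAt_L_z zs ρ z i hρ).const_mul (a i)))
  have h3 : HasDerivAt (fun t => (ρ ^ 2 / 2) *
      ∑ i, a i * Real.log ((dd zs ρ t i + t - zs i) / (dd zs ρ t i - t + zs i)))
      (ρ ^ 2 / 2 * ∑ i, a i * (2 / dd zs ρ z i)) z := by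
    simpa using hLsum.const_mul (ρ ^ 2 / 2)
  exact (h1.add (HasDerivAt.fun_sum (fun i (_ : i ∈ Finset.univ) => hterm i))).add h3

lemma hasDerivAt_H_ρ (hρ : 0 < ρ) :
    HasDerivAt (fun s => genH A a zs s z)
      ((∑ i, a i * (z - zs i) * (ρ / dd zs ρ z i))
        + (ρ * (∑ i, a i * Real.log ((dd zs ρ z i + z - zs i) / (dd zs ρ z i - z + zs i)))
          + ρ ^ 2 / 2 * ∑ i, a i * (-2 * (z - zs i) / (ρ * dd zs ρ z i)))) ρ := by
  have h1 : HasDerivAt (fun _ : ℝ => 2 * A * z) 0 ρ := hasDerivAt_const ρ _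
  have hterm : ∀ i : Fin r, HasDerivAt (fun s => a i * (z - zs i) * dd zs s z i)
      (a i * (z - zs i) * (ρ / dd zs ρ z i)) ρ := fun i =>
    (hasDerivAt_dd_ρ zs ρ z i hρ).const_mul (a i * (z - zs i))
  have hsq : HasDerivAt (fun s : ℝ => s ^ 2 / 2) ρ ρ := by
    have := (hasDerivAt_pow 2 ρ).div_const 2
    convert this using 1
    · rfl
    · rfl
    ring
  have hLsum := HasDerivAt.fun_sum (fun i (_ : i ∈ Finset.univ) =>
    ((hasDerivAt_L_ρ zs ρ z i hρ).const_mul (a i)))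
  have h3 := hsq.fun_mul hLsum
  have h := (h1.fun_add (HasDerivAt.fun_sum (fun i (_ : i ∈ Finset.univ) => hterm i))).fun_add h3
  simpa [genH, Finset.mul_sum] using h

theorem statement2 {r : ℕ} (hr : 1 ≤ r) (A : ℝ) (hA : 0 < A)
    (zs a : Fin r → ℝ)
    (hz : ∀ i j : Fin r, i < j → zs i < zs j)
    (ha : ∀ i, 0 < a i) (hsum : ∑ i, a i = 1)
    (ρ z : ℝ) (hρ : 0 < ρ) :
    -- H_z = ρ U_ρ
    HasDerivAt (fun t => genH A a zs ρ t)
      (ρ * deriv (fun s => genU A a zs s z) ρ) z ∧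
    -- H_ρ = −ρ U_z
    HasDerivAt (fun t => genH A a zs t z)
      (-ρ * deriv (fun s => genU A a zs ρ s) z) ρ := by
  constructor
  · rw [(hasDerivAt_U_ρ zs ρ z A a hρ).deriv]
    convert hasDerivAt_H_z zs ρ z A a hρ using 1
    rw [mul_add, Finset.mul_sum, Finset.mul_sum, add_assoc, ← Finset.sum_add_distrib]
    congr 1
    · field_simp
    · apply Finset.sum_congr rfl
      intro i _
      have hd := dd_pos zs ρ z i hρ
      have hsq := dd_sq zs ρ z i hρ
      field_simp
      linear_combination (a i) * hsq
  · rw [(hasDerivAt_U_z zs ρ z A a hρ).deriv]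
    convert hasDerivAt_H_ρ zs ρ z A a hρ using 1
    rw [Finset.mul_sum, Finset.mul_sum, Finset.mul_sum, ← Finset.sum_add_distrib,
      ← Finset.sum_add_distrib]
    apply Finset.sum_congr rfl
    intro i _
    have hd := dd_pos zs ρ z i hρ
    field_simp
    ring
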